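/- arXiv:2501.07640 — 3 statements merged into one kernel-verified Lean document; each statement's English description precedes it below -/
import Mathlib

section
/- (Dynkin–Specht–Wever for homogeneous Lie elements.) Let T be the free associative ℂ-algebra (tensor algebra) on generators η_1,…,η_h, and let L ⊂ T be the free Lie algebra generated by the η_i under the commutator bracket. If P = ∑ X^{J_1 ⋯ J_r} η_{J_1} ⋯ η_{J_r} is a homogeneous element of degree r ≥ 1 that lies in L, then P = (1/r) ∑ X^{J_1 ⋯ J_r} [η_{J_1}, [η_{J_2}, ⋯ [η_{J_{r−1}}, η_{J_r}] ⋯ ]]. -/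
open FreeAlgebra

attribute [local instance 100] LieRing.ofAssociativeRing

namespace DSW

variable {I : Type*}

noncomputable def W (l : List I) : FreeAlgebra ℂ I := (l.map (ι ℂ)).prod

noncomputable def B : List I → FreeAlgebra ℂ I
  | [] => 0
  | [a] => ι ℂ a
  | a :: b :: l => ⁅ι ℂ a, B (b :: l)⁆

lemma W_nil : W ([] : List I) = 1 := rfl

lemma W_cons (a : I) (l : List I) : W (a :: l) = ι ℂ a * W l := by simp [W]

lemma W_append (u w : List I) : W (u ++ w) = W u * W w := by simp [W]

lemma B_cons (a : I) {l : List I} (hl : l ≠ []) : B (a :: l) = ⁅ι ℂ a, B l⁆ := by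
  cases l with
  | nil => exact absurd rfl hl
  | cons b l => rfl

lemma basis_eq (w : FreeMonoid I) : basisFreeMonoid ℂ I w = W w.toList := by
  have h1 : basisFreeMonoid ℂ I w
      = (equivMonoidAlgebraFreeMonoid (R := ℂ) (X := I)).symm (MonoidAlgebra.single w 1) := by
    simp [basisFreeMonoid, Module.Basis.map_apply]
  have h2 : (equivMonoidAlgebraFreeMonoid (R := ℂ) (X := I)).symm (MonoidAlgebra.single w 1)
      = ((MonoidAlgebra.lift ℂ (FreeAlgebra ℂ I) (FreeMonoid I)) (FreeMonoid.lift (ι ℂ)))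
        (MonoidAlgebra.single w 1) := rfl
  rw [h1, h2, MonoidAlgebra.lift_single]
  simp [FreeMonoid.lift_apply, W]

lemma lmap_ext {M : Type*} [AddCommGroup M] [Module ℂ M]
    {f g : FreeAlgebra ℂ I →ₗ[ℂ] M}
    (hfg : ∀ l : List I, f (W l) = g (W l)) : f = g :=
  Module.Basis.ext (basisFreeMonoid ℂ I) fun w => by rw [basis_eq]; exact hfg _

/-- The Dynkin map. -/
noncomputable def fD : FreeAlgebra ℂ I →ₗ[ℂ] FreeAlgebra ℂ I :=
  (basisFreeMonoid ℂ I).constr ℂ fun w => B w.toList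

/-- The Euler (degree-counting) operator. -/
noncomputable def ED : FreeAlgebra ℂ I →ₗ[ℂ] FreeAlgebra ℂ I :=
  (basisFreeMonoid ℂ I).constr ℂ fun w => (w.toList.length : ℂ) • W w.toList

lemma fD_W (l : List I) : fD (W l) = B l := by
  have := (basisFreeMonoid ℂ I).constr_basis ℂ (fun w => B (FreeMonoid.toList w))
    (FreeMonoid.ofList l)
  rw [basis_eq] at this
  exact this

lemma ED_W (l : List I) : ED (W l) = (l.length : ℂ) • W l := by
  have := (basisFreeMonoid ℂ I).constr_basis ℂ
    (fun w => ((FreeMonoid.toList w).length : ℂ) • W (FreeMonoid.toList w)) (FreeMonoid.ofList l)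
  rw [basis_eq] at this
  exact this

noncomputable def eps : FreeAlgebra ℂ I →ₐ[ℂ] ℂ := lift ℂ (0 : I → ℂ)

noncomputable def rho : FreeAlgebra ℂ I →ₐ[ℂ] Module.End ℂ (FreeAlgebra ℂ I) :=
  lift ℂ fun i => LinearMap.mulLeft ℂ (ι ℂ i) - LinearMap.mulRight ℂ (ι ℂ i)

lemma rho_ι (i : I) (z : FreeAlgebra ℂ I) : rho (ι ℂ i) z = ⁅ι ℂ i, z⁆ := by
  simp [rho, Ring.lie_def]

lemma eps_W_ne_nil {l : List I} (hl : l ≠ []) : eps (W l) = 0 := by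
  cases l with
  | nil => exact absurd rfl hl
  | cons a l => simp [W_cons, eps]

lemma rho_W_B {u w : List I} (hw : w ≠ []) : rho (W u) (B w) = B (u ++ w) := by
  induction u with
  | nil => simp [W_nil]
  | cons a u ih =>
    rw [W_cons, map_mul, Module.End.mul_apply, ih, rho_ι, ← B_cons a (by simp [hw])]
    rfl

lemma fD_word_mul (u w : List I) :
    fD (W u * W w) = rho (W u) (B w) + eps (W w) • B u := by
  rcases eq_or_ne w [] with rfl | hw
  · simp [W_nil, fD_W, B, eps]
  · rw [← W_append, fD_W, rho_W_B hw, eps_W_ne_nil hw, zero_smul, add_zero]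

lemma fD_mul (x y : FreeAlgebra ℂ I) :
    fD (x * y) = rho x (fD y) + eps y • fD x := by
  have step1 : ∀ (u : List I) (y : FreeAlgebra ℂ I),
      fD (W u * y) = rho (W u) (fD y) + eps y • fD (W u) := by
    intro u
    have : fD ∘ₗ LinearMap.mulLeft ℂ (W u)
        = (rho (W u)) ∘ₗ fD
          + LinearMap.toSpanSingleton ℂ (FreeAlgebra ℂ I) (fD (W u)) ∘ₗ
            AlgHom.toLinearMap (eps (I := I)) := by
      apply lmap_ext
      intro w
      simp only [LinearMap.comp_apply, LinearMap.add_apply, LinearMap.mulLeft_apply,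
        LinearMap.toSpanSingleton_apply, AlgHom.toLinearMap_apply]
      rw [fD_word_mul, fD_W, fD_W]
    intro y
    have := congrArg (fun φ => φ y) this
    simpa using this
  have : fD ∘ₗ LinearMap.mulRight ℂ y
      = (LinearMap.applyₗ (fD y)) ∘ₗ AlgHom.toLinearMap (rho (I := I)) + eps y • fD := by
    apply lmap_ext
    intro u
    simp only [LinearMap.comp_apply, LinearMap.add_apply, LinearMap.mulRight_apply,
      AlgHom.toLinearMap_apply, LinearMap.smul_apply]
    rw [step1 u y, fD_W]
    rfl
  have := congrArg (fun φ => φ x) this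
  simpa using this

lemma ED_mul (x y : FreeAlgebra ℂ I) : ED (x * y) = ED x * y + x * ED y := by
  have step1 : ∀ (u : List I) (y : FreeAlgebra ℂ I),
      ED (W u * y) = ED (W u) * y + W u * ED y := by
    intro u
    have : ED ∘ₗ LinearMap.mulLeft ℂ (W u)
        = LinearMap.mulLeft ℂ (ED (W u)) + (LinearMap.mulLeft ℂ (W u)) ∘ₗ ED := by
      apply lmap_ext
      intro w
      simp only [LinearMap.comp_apply, LinearMap.add_apply, LinearMap.mulLeft_apply]
      rw [← W_append, ED_W, ED_W, ED_W, List.length_append, W_append]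
      push_cast
      rw [add_smul, smul_mul_assoc, mul_smul_comm]
    intro y
    have := congrArg (fun φ => φ y) this
    simpa using this
  have : ED ∘ₗ LinearMap.mulRight ℂ y
      = (LinearMap.mulRight ℂ y) ∘ₗ ED + LinearMap.mulRight ℂ (ED y) := by
    apply lmap_ext
    intro u
    simp only [LinearMap.comp_apply, LinearMap.add_apply, LinearMap.mulRight_apply]
    rw [step1 u y]
  have := congrArg (fun φ => φ x) this
  simpa using this

lemma key (y : FreeAlgebra ℂ I)
    (hy : y ∈ LieSubalgebra.lieSpan ℂ (FreeAlgebra ℂ I) (Set.range (ι ℂ))) :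
    fD y = ED y := by
  have main : (rho y = LinearMap.mulLeft ℂ y - LinearMap.mulRight ℂ y)
      ∧ eps y = 0 ∧ fD y = ED y := by
    refine LieSubalgebra.lieSpan_induction (R := ℂ)
      (p := fun y _ => (rho y = LinearMap.mulLeft ℂ y - LinearMap.mulRight ℂ y)
        ∧ eps y = 0 ∧ fD y = ED y) ?_ ?_ ?_ ?_ ?_ hy
    · rintro x ⟨i, rfl⟩
      refine ⟨by simp [rho], by simp [eps], ?_⟩
      have h1 : ι ℂ i = W [i] := by simp [W]
      rw [h1, fD_W, ED_W]
      simp [B, W]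
    · simp
    · rintro x y _ _ ⟨h1, h2, h3⟩ ⟨k1, k2, k3⟩
      refine ⟨?_, by simp [h2, k2], by simp [h3, k3]⟩
      rw [map_add, h1, k1]
      ext z
      simp [add_mul, mul_add]
      abel
    · rintro c x _ ⟨h1, h2, h3⟩
      refine ⟨?_, by simp [h2], by simp [h3]⟩
      rw [map_smul, h1]
      ext z
      simp [smul_mul_assoc, mul_smul_comm, smul_sub]
    · rintro x y _ _ ⟨h1, h2, h3⟩ ⟨k1, k2, k3⟩
      have hlie : ⁅x, y⁆ = x * y - y * x := Ring.lie_def x y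
      refine ⟨?_, ?_, ?_⟩
      · rw [hlie, map_sub, map_mul, map_mul, h1, k1]
        ext z
        simp only [LinearMap.sub_apply, Module.End.mul_apply, LinearMap.mulLeft_apply,
          LinearMap.mulRight_apply, LinearMap.map_sub, map_sub, sub_mul, mul_sub]
        noncomm_ring
      · rw [hlie, map_sub, map_mul, map_mul, h2, k2]
        ring
      · rw [hlie, map_sub, fD_mul, fD_mul, h2, k2, zero_smul, zero_smul, add_zero, add_zero,
          h3, k3, h1, k1, map_sub, ED_mul, ED_mul]
        simp only [LinearMap.sub_apply, LinearMap.mulLeft_apply, LinearMap.mulRight_apply]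
        abel
  exact main.2.2

end DSW

/-- Dynkin–Specht–Wever: if a homogeneous element
`P = ∑ X^{J₁ ⋯ J_{r+1}} η_{J₁} ⋯ η_{J_{r+1}}` of degree `r+1 ≥ 1` of the free
associative algebra lies in the free Lie algebra generated by the `η_i`
(the Lie subalgebra generated by the generators, with `⁅x,y⁆ = xy − yx`), then
`P = (1/(r+1)) ∑ X^{J₁ ⋯ J_{r+1}} [η_{J₁}, [η_{J₂}, ⋯ [η_{J_r}, η_{J_{r+1}}] ⋯ ]]`. -/
theorem stmt_3 (h r : ℕ) (X : (Fin (r + 1) → Fin h) → ℂ)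
    (hP : (∑ J : Fin (r + 1) → Fin h, X J • (List.ofFn fun k => ι ℂ (J k)).prod)
        ∈ LieSubalgebra.lieSpan ℂ (FreeAlgebra ℂ (Fin h)) (Set.range (ι ℂ))) :
    (∑ J : Fin (r + 1) → Fin h, X J • (List.ofFn fun k => ι ℂ (J k)).prod)
      = ((r : ℂ) + 1)⁻¹ • ∑ J : Fin (r + 1) → Fin h,
          X J • (List.ofFn fun k : Fin r => ι ℂ (J k.castSucc)).foldr
              (fun a acc => ⁅a, acc⁆) (ι ℂ (J (Fin.last r))) := by
  classical
  have hword : ∀ J : Fin (r + 1) → Fin h,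
      (List.ofFn fun k => ι ℂ (J k)).prod = DSW.W (List.ofFn J) := by
    intro J
    simp [DSW.W, List.map_ofFn, Function.comp_def]
  have hBfold : ∀ (l : List (Fin h)) (a : Fin h),
      DSW.B (l ++ [a]) = (l.map (ι ℂ)).foldr (fun x acc => ⁅x, acc⁆) (ι ℂ a) := by
    intro l
    induction l with
    | nil => intro a; simp [DSW.B]
    | cons b l ih =>
      intro a
      rw [List.cons_append, DSW.B_cons b (by simp), ih]
      simp
  have hbr : ∀ J : Fin (r + 1) → Fin h,
      (List.ofFn fun k : Fin r => ι ℂ (J k.castSucc)).foldr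
          (fun a acc => ⁅a, acc⁆) (ι ℂ (J (Fin.last r)))
        = DSW.B (List.ofFn J) := by
    intro J
    rw [List.ofFn_succ' J, List.concat_eq_append, hBfold]
    simp [List.map_ofFn, Function.comp_def]
  set P := ∑ J : Fin (r + 1) → Fin h, X J • (List.ofFn fun k => ι ℂ (J k)).prod with hPdef
  have hkey := DSW.key P hP
  have hf : DSW.fD P = ∑ J : Fin (r + 1) → Fin h, X J • DSW.B (List.ofFn J) := by
    rw [hPdef, map_sum]
    refine Finset.sum_congr rfl fun J _ => ?_
    rw [map_smul, hword J, DSW.fD_W]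
  have hE : DSW.ED P = ((r : ℂ) + 1) • P := by
    rw [hPdef, map_sum, Finset.smul_sum]
    refine Finset.sum_congr rfl fun J _ => ?_
    rw [map_smul, hword J, DSW.ED_W, List.length_ofFn, smul_comm]
    push_cast
    ring_nf
  have hne : ((r : ℂ) + 1) ≠ 0 := by
    exact_mod_cast Nat.cast_add_one_ne_zero (R := ℂ) r
  have hmain : ((r : ℂ) + 1) • P = ∑ J : Fin (r + 1) → Fin h, X J • DSW.B (List.ofFn J) := by
    rw [← hf, hkey, hE]
  calc P = ((r : ℂ) + 1)⁻¹ • (((r : ℂ) + 1) • P) := by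
        rw [smul_smul, inv_mul_cancel₀ hne, one_smul]
    _ = _ := by
        rw [hmain]
        congr 1
        exact Finset.sum_congr rfl fun J _ => by rw [hbr J]
end

section
/- (Ree's theorem, forward direction.) Let T̂ be the completed tensor algebra over ℂ on generators b_1,…,b_h, and let x = ∑_w c_w w be an element of the completed free Lie algebra generated by the b_i, written as a series over words w with complex coefficients c_w. Then for all nonempty words w_1 and w_2, the shuffle sum of the coefficients vanishes: ∑_{w ∈ w_1 ⧢ w_2} c_w = 0, and moreover c_∅ = 0. -/
/-- The multiset of shuffles of two words: all interleavings of `xs` and `ys`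
preserving the internal order of each, counted with multiplicity. -/
def shuffles {α : Type*} : List α → List α → Multiset (List α)
  | [], ys => {ys}
  | x :: xs, [] => {x :: xs}
  | x :: xs, y :: ys =>
      (shuffles xs (y :: ys)).map (x :: ·) + (shuffles (x :: xs) ys).map (y :: ·)
  termination_by xs ys => xs.length + ys.length
  decreasing_by all_goals simp only [List.length_cons]; omega

attribute [local instance] LieRing.ofAssociativeRing

namespace ReeAux
variable {α : Type*}

lemma shuffles_nil_left (v : List α) : shuffles [] v = {v} := by rw [shuffles]
lemma shuffles_nil_right (u : List α) : shuffles u [] = {u} := by cases u <;> rw [shuffles]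
lemma shuffles_cons_cons (x y : α) (xs ys : List α) :
    shuffles (x::xs) (y::ys)
      = (shuffles xs (y::ys)).map (x :: ·) + (shuffles (x::xs) ys).map (y :: ·) := by
  rw [shuffles]

/-- The shuffle sum of a functional. -/
noncomputable def S (f : List α → ℂ) (u v : List α) : ℂ := ((shuffles u v).map f).sum

lemma S_nil_left (f : List α → ℂ) (v : List α) : S f [] v = f v := by
  simp [S, shuffles_nil_left]

lemma S_nil_right (f : List α → ℂ) (u : List α) : S f u [] = f u := by
  simp [S, shuffles_nil_right]

lemma S_cons_cons (f : List α → ℂ) (x y : α) (xs ys : List α) :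
    S f (x::xs) (y::ys)
      = S (fun w => f (x::w)) xs (y::ys) + S (fun w => f (y::w)) (x::xs) ys := by
  simp [S, shuffles_cons_cons, Multiset.map_map, Function.comp]

lemma S_add (f g : List α → ℂ) (u v : List α) :
    S (fun w => f w + g w) u v = S f u v + S g u v := by
  simp [S, Multiset.sum_map_add]

lemma S_mul_left (r : ℂ) (f : List α → ℂ) (u v : List α) :
    S (fun w => r * f w) u v = r * S f u v := by
  simp [S, Multiset.sum_map_mul_left]

lemma S_sub (f g : List α → ℂ) (u v : List α) :
    S (fun w => f w - g w) u v = S f u v - S g u v := by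
  have : ∀ w, f w - g w = f w + (-1) * g w := by intro w; ring
  simp only [this]
  rw [S_add, S_mul_left]
  ring

lemma S_eq_zero {f : List α → ℂ} {u v : List α}
    (hf : ∀ w ∈ shuffles u v, f w = 0) : S f u v = 0 := by
  rw [S]
  apply Multiset.sum_eq_zero
  intro x hx
  rcases Multiset.mem_map.1 hx with ⟨w, hw, rfl⟩
  exact hf w hw

lemma length_mem_shuffles : ∀ (u v w : List α), w ∈ shuffles u v →
    w.length = u.length + v.length
  | [], v, w, hw => by
      rw [shuffles_nil_left] at hw
      simp at hw; simp [hw]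
  | x :: xs, [], w, hw => by
      rw [shuffles_nil_right] at hw
      simp at hw; simp [hw]
  | x :: xs, y :: ys, w, hw => by
      rw [shuffles_cons_cons] at hw
      rcases Multiset.mem_add.1 hw with hw | hw <;> rcases Multiset.mem_map.1 hw with ⟨t, ht, rfl⟩
      · have := length_mem_shuffles xs (y::ys) t ht
        simp at this ⊢; omega
      · have := length_mem_shuffles (x::xs) ys t ht
        simp at this ⊢; omega
  termination_by u v => u.length + v.length
  decreasing_by all_goals simp only [List.length_cons]; omega

/-- The deconcatenation convolution of two functionals. -/
noncomputable def D (f g : List α → ℂ) (w : List α) : ℂ :=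
  ∑ i ∈ Finset.range (w.length + 1), f (w.take i) * g (w.drop i)

lemma D_cons (f g : List α → ℂ) (x : α) (w : List α) :
    D f g (x::w) = f [] * g (x::w) + D (fun t => f (x::t)) g w := by
  rw [D, Finset.sum_range_succ']
  simp [D, add_comm]

lemma split4 (n m : ℕ) (F : ℕ → ℕ → ℂ) :
    ∑ j ∈ Finset.range (n+1+1), ∑ k ∈ Finset.range (m+1+1), F j k
      = F 0 0 + (∑ k ∈ Finset.range (m+1), F 0 (k+1))
        + (∑ j ∈ Finset.range (n+1), F (j+1) 0)
        + ∑ j ∈ Finset.range (n+1), ∑ k ∈ Finset.range (m+1), F (j+1) (k+1) := by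
  rw [Finset.sum_range_succ' (fun j => ∑ k ∈ Finset.range (m+1+1), F j k) (n+1),
      Finset.sum_range_succ' (fun k => F 0 k) (m+1),
      Finset.sum_congr rfl (fun j _ => Finset.sum_range_succ' (fun k => F (j+1) k) (m+1)),
      Finset.sum_add_distrib]
  abel

lemma peel_inner (n m : ℕ) (F : ℕ → ℕ → ℂ) :
    ∑ j ∈ Finset.range (n+1), ∑ k ∈ Finset.range (m+1+1), F j k
      = (∑ j ∈ Finset.range (n+1), F j 0)
        + ∑ j ∈ Finset.range (n+1), ∑ k ∈ Finset.range (m+1), F j (k+1) := by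
  rw [Finset.sum_congr rfl (fun j _ => Finset.sum_range_succ' (fun k => F j k) (m+1)),
      Finset.sum_add_distrib]
  abel

lemma peel_outer (n m : ℕ) (F : ℕ → ℕ → ℂ) :
    ∑ j ∈ Finset.range (n+1+1), ∑ k ∈ Finset.range (m+1), F j k
      = (∑ k ∈ Finset.range (m+1), F 0 k)
        + ∑ j ∈ Finset.range (n+1), ∑ k ∈ Finset.range (m+1), F (j+1) k := by
  rw [Finset.sum_range_succ' (fun j => ∑ k ∈ Finset.range (m+1), F j k) (n+1)]
  abel

/-- Key lemma: deconcatenation is compatible with shuffles (bialgebra compatibility). -/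
theorem key : ∀ (u v : List α) (f g : List α → ℂ),
    S (D f g) u v
      = ∑ j ∈ Finset.range (u.length + 1), ∑ k ∈ Finset.range (v.length + 1),
          S f (u.take j) (v.take k) * S g (u.drop j) (v.drop k)
  | [], v, f, g => by
      simp [S_nil_left, D]
  | x :: xs, [], f, g => by
      simp [S_nil_right, D]
  | x :: xs, y :: ys, f, g => by
      have hx : S (D f g) (x::xs) (y::ys)
          = S (fun w => D f g (x::w)) xs (y::ys) + S (fun w => D f g (y::w)) (x::xs) ys :=
        S_cons_cons _ x y xs ys
      rw [hx]
      have e1 : S (fun w => D f g (x::w)) xs (y::ys)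
          = f [] * S (fun w => g (x::w)) xs (y::ys) + S (D (fun t => f (x::t)) g) xs (y::ys) := by
        have h : (fun w => D f g (x::w))
            = fun w => f [] * g (x::w) + D (fun t => f (x::t)) g w := by
          funext w; exact D_cons f g x w
        rw [h, S_add, S_mul_left]
      have e2 : S (fun w => D f g (y::w)) (x::xs) ys
          = f [] * S (fun w => g (y::w)) (x::xs) ys + S (D (fun t => f (y::t)) g) (x::xs) ys := by
        have h : (fun w => D f g (y::w))
            = fun w => f [] * g (y::w) + D (fun t => f (y::t)) g w := by
          funext w; exact D_cons f g y w
        rw [h, S_add, S_mul_left]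
      rw [e1, e2, key xs (y::ys) (fun t => f (x::t)) g, key (x::xs) ys (fun t => f (y::t)) g]
      simp only [List.length_cons]
      rw [split4 xs.length ys.length
            (fun j k => S f ((x::xs).take j) ((y::ys).take k)
              * S g ((x::xs).drop j) ((y::ys).drop k)),
          peel_inner xs.length ys.length
            (fun j k => S (fun t => f (x::t)) (xs.take j) ((y::ys).take k)
              * S g (xs.drop j) ((y::ys).drop k)),
          peel_outer xs.length ys.length
            (fun j k => S (fun t => f (y::t)) ((x::xs).take j) (ys.take k)
              * S g ((x::xs).drop j) (ys.drop k))]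
      simp only [List.take_zero, List.drop_zero, List.take_succ_cons, List.drop_succ_cons,
        S_nil_left, S_nil_right]
      have h4 : ∀ j k : ℕ,
          S f (x :: xs.take j) (y :: ys.take k) * S g (xs.drop j) (ys.drop k)
            = S (fun t => f (x::t)) (xs.take j) (y :: ys.take k) * S g (xs.drop j) (ys.drop k)
              + S (fun t => f (y::t)) (x :: xs.take j) (ys.take k)
                * S g (xs.drop j) (ys.drop k) := by
        intro j k
        rw [S_cons_cons, add_mul]
      rw [Finset.sum_congr rfl fun j _ => Finset.sum_congr rfl fun k _ => h4 j k]
      simp only [Finset.sum_add_distrib]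
      rw [S_cons_cons g x y xs ys]
      ring
  termination_by u v => u.length + v.length
  decreasing_by all_goals simp only [List.length_cons]; omega

/-- Evaluation of the double sum from `key` when `f` and `g` kill shuffles. -/
lemma eval_double (f g : List α → ℂ) (hf0 : f [] = 0) (hg0 : g [] = 0)
    (hf : ∀ u v : List α, u ≠ [] → v ≠ [] → S f u v = 0)
    (hg : ∀ u v : List α, u ≠ [] → v ≠ [] → S g u v = 0)
    (u v : List α) (hu : u ≠ []) (hv : v ≠ []) :
    ∑ j ∈ Finset.range (u.length + 1), ∑ k ∈ Finset.range (v.length + 1),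
        S f (u.take j) (v.take k) * S g (u.drop j) (v.drop k)
      = f u * g v + f v * g u := by
  classical
  have hptwise : ∀ j ∈ Finset.range (u.length + 1), ∀ k ∈ Finset.range (v.length + 1),
      S f (u.take j) (v.take k) * S g (u.drop j) (v.drop k)
        = (if j = u.length ∧ k = 0 then f u * g v else 0)
          + (if j = 0 ∧ k = v.length then f v * g u else 0) := by
    intro j hj k hk
    simp only [Finset.mem_range] at hj hk
    have hul : u.length ≠ 0 := by simpa [List.length_eq_zero_iff] using hu
    have hvl : v.length ≠ 0 := by simpa [List.length_eq_zero_iff] using hv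
    by_cases hj0 : j = 0
    · subst hj0
      simp only [List.take_zero, List.drop_zero, S_nil_left]
      by_cases hk0 : k = 0
      · subst hk0
        simp [S_nil_left, hf0, hu, hv, hul, hvl, Ne.symm hul, Ne.symm hvl]
      · by_cases hkv : k = v.length
        · subst hkv
          simp only [List.take_length, List.drop_length, S_nil_right]
          simp [hu, hv, hul, hvl, Ne.symm hul, Ne.symm hvl]
        · have hd : v.drop k ≠ [] := by
            simp only [ne_eq, List.drop_eq_nil_iff]
            omega
          rw [hg u (v.drop k) hu hd]
          simp [hk0, hkv, hu, hv, hul, hvl, Ne.symm hul, Ne.symm hvl]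
    · by_cases hk0 : k = 0
      · subst hk0
        simp only [List.take_zero, List.drop_zero, S_nil_right]
        by_cases hju : j = u.length
        · subst hju
          simp only [List.take_length, List.drop_length, S_nil_left]
          simp [hu, hv, hul, hvl, Ne.symm hul, Ne.symm hvl]
        · have hd : u.drop j ≠ [] := by
            simp only [ne_eq, List.drop_eq_nil_iff]
            omega
          rw [hg (u.drop j) v hd hv]
          simp [hj0, hju, hu, hv, hul, hvl]
      · have ht1 : u.take j ≠ [] := by
          simp only [ne_eq, List.take_eq_nil_iff]
          tauto
        have ht2 : v.take k ≠ [] := by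
          simp only [ne_eq, List.take_eq_nil_iff]
          tauto
        rw [hf (u.take j) (v.take k) ht1 ht2]
        simp [hj0, hk0, hu, hv]
  rw [Finset.sum_congr rfl fun j hj => Finset.sum_congr rfl fun k hk => hptwise j hj k hk]
  simp only [Finset.sum_add_distrib, ite_and, Finset.sum_ite_irrel, Finset.sum_const_zero,
    Finset.sum_ite_eq', Finset.mem_range]
  simp

end ReeAux

section Coeffs

open ReeAux

variable {α : Type*}

/-- Coefficient splitting for products in a monoid algebra over a free monoid. -/
lemma mul_apply_splits (p q : MonoidAlgebra ℂ (FreeMonoid α)) (w : List α) :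
    (p * q).coeff (FreeMonoid.ofList w)
      = ∑ i ∈ Finset.range (w.length + 1),
          p.coeff (FreeMonoid.ofList (w.take i)) * q.coeff (FreeMonoid.ofList (w.drop i)) := by
  classical
  have addap : ∀ (f g : MonoidAlgebra ℂ (FreeMonoid α)) (x : FreeMonoid α),
      (f + g).coeff x = f.coeff x + g.coeff x := fun f g x => rfl
  induction p using MonoidAlgebra.induction_linear with
  | zero => simp
  | add p1 p2 h1 h2 => simp [add_mul, h1, h2, addap, Finset.sum_add_distrib]
  | single a r =>
    induction q using MonoidAlgebra.induction_linear with
    | zero => simp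
    | add q1 q2 h1 h2 => simp [mul_add, h1, h2, addap, Finset.sum_add_distrib]
    | single b s =>
      rw [MonoidAlgebra.single_mul_single]
      simp only [MonoidAlgebra.single_apply]
      by_cases hw : a * b = FreeMonoid.ofList w
      · rw [if_pos hw]
        have hab : FreeMonoid.toList a ++ FreeMonoid.toList b = w := by
          have := congrArg FreeMonoid.toList hw
          simpa [FreeMonoid.toList_mul] using this
        rw [Finset.sum_eq_single (FreeMonoid.toList a).length]
        · rw [← hab]
          simp [List.take_left, List.drop_left]
        · intro i hi hne
          have hia : a ≠ FreeMonoid.ofList (w.take i) := by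
            intro hia
            apply hne
            have h1 : FreeMonoid.toList a = w.take i := congrArg FreeMonoid.toList hia
            rw [h1, List.length_take]
            simp only [Finset.mem_range] at hi
            omega
          rw [if_neg hia, zero_mul]
        · intro habs
          exfalso
          apply habs
          simp only [Finset.mem_range]
          have : w.length = (FreeMonoid.toList a).length + (FreeMonoid.toList b).length := by
            rw [← hab, List.length_append]
          omega
      · rw [if_neg hw]
        symm
        apply Finset.sum_eq_zero
        intro i _
        by_cases h1 : a = FreeMonoid.ofList (w.take i)
        · by_cases h2 : b = FreeMonoid.ofList (w.drop i)
          · exfalso; apply hw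
            rw [h1, h2, ← FreeMonoid.ofList_append, List.take_append_drop]
          · rw [if_neg h2, mul_zero]
        · rw [if_neg h1, zero_mul]

variable (h : ℕ)

/-- The isomorphism from the free algebra to the monoid algebra over the free monoid. -/
noncomputable def EFA : FreeAlgebra ℂ (Fin h) ≃ₐ[ℂ] MonoidAlgebra ℂ (FreeMonoid (Fin h)) :=
  FreeAlgebra.equivMonoidAlgebraFreeMonoid

/-- Coefficient of the word `w` in an element of the free algebra. -/
noncomputable def cf (p : FreeAlgebra ℂ (Fin h)) (w : List (Fin h)) : ℂ :=
  (EFA h p).coeff (FreeMonoid.ofList w)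

lemma cf_iota (b : Fin h) (w : List (Fin h)) :
    cf h (FreeAlgebra.ι ℂ b) w = if w = [b] then 1 else 0 := by
  classical
  have hE : EFA h (FreeAlgebra.ι ℂ b) = MonoidAlgebra.single (FreeMonoid.of b) 1 := by
    simp [EFA, FreeAlgebra.equivMonoidAlgebraFreeMonoid]
  rw [cf, hE, MonoidAlgebra.single_apply]
  by_cases hw : w = [b]
  · subst hw
    simp
  · rw [if_neg hw, if_neg]
    intro hx
    apply hw
    have := congrArg FreeMonoid.toList hx
    simpa [eq_comm] using this

lemma cf_mul (p q : FreeAlgebra ℂ (Fin h)) (w : List (Fin h)) :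
    cf h (p * q) w
      = ∑ i ∈ Finset.range (w.length + 1), cf h p (w.take i) * cf h q (w.drop i) := by
  rw [cf, map_mul]
  exact mul_apply_splits (EFA h p) (EFA h q) w

lemma cf_add (p q : FreeAlgebra ℂ (Fin h)) (w : List (Fin h)) :
    cf h (p + q) w = cf h p w + cf h q w := by
  rw [cf, cf, cf, map_add]; rfl

lemma cf_sub (p q : FreeAlgebra ℂ (Fin h)) (w : List (Fin h)) :
    cf h (p - q) w = cf h p w - cf h q w := by
  rw [cf, cf, cf, map_sub]; rfl

lemma cf_smul (r : ℂ) (p : FreeAlgebra ℂ (Fin h)) (w : List (Fin h)) :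
    cf h (r • p) w = r * cf h p w := by
  rw [cf, cf, map_smul]; rfl

lemma cf_zero (w : List (Fin h)) : cf h 0 w = 0 := by
  rw [cf, map_zero]; rfl

/-- Ree's theorem for Lie elements of the free algebra. -/
theorem lie_vanish (p : FreeAlgebra ℂ (Fin h))
    (hp : p ∈ LieSubalgebra.lieSpan ℂ (FreeAlgebra ℂ (Fin h)) (Set.range (FreeAlgebra.ι ℂ))) :
    cf h p [] = 0 ∧
      ∀ u v : List (Fin h), u ≠ [] → v ≠ [] → S (cf h p) u v = 0 := by
  classical
  refine LieSubalgebra.lieSpan_induction (R := ℂ) (L := FreeAlgebra ℂ (Fin h))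
    (p := fun q _ => cf h q [] = 0 ∧
      ∀ u v : List (Fin h), u ≠ [] → v ≠ [] → S (cf h q) u v = 0) ?_ ?_ ?_ ?_ ?_ hp
  rotate_left 2; swap; rotate_right 2
  · rintro x ⟨b, rfl⟩
    constructor
    · rw [cf_iota]; simp
    · intro u v hu hv
      apply S_eq_zero
      intro w hw
      have hl := length_mem_shuffles u v w hw
      have hu1 : 1 ≤ u.length := List.length_pos_iff.2 hu
      have hv1 : 1 ≤ v.length := List.length_pos_iff.2 hv
      rw [cf_iota]
      have : w ≠ [b] := by
        intro hwb
        rw [hwb] at hl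
        simp at hl
        omega
      simp [this]
  · constructor
    · exact cf_zero h []
    · intro u v _ _
      apply S_eq_zero
      intro w _
      exact cf_zero h w
  · intro r x _ hx
    constructor
    · rw [cf_smul, hx.1, mul_zero]
    · intro u v hu hv
      have : (cf h (r • x)) = fun w => r * cf h x w := by
        funext w; exact cf_smul h r x w
      rw [this, S_mul_left, hx.2 u v hu hv, mul_zero]
  · intro x y _ _ hx hy
    constructor
    · rw [cf_add, hx.1, hy.1, add_zero]
    · intro u v hu hv
      have : (cf h (x + y)) = fun w => cf h x w + cf h y w := by
        funext w; exact cf_add h x y w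
      rw [this, S_add, hx.2 u v hu hv, hy.2 u v hu hv, add_zero]
  · intro x y _ _ hx hy
    have hmul0 : ∀ a b : FreeAlgebra ℂ (Fin h),
        cf h a [] = 0 → cf h (a * b) [] = 0 := by
      intro a b ha
      rw [cf_mul]
      simp [ha]
    have hmulS : ∀ a b : FreeAlgebra ℂ (Fin h),
        (cf h a [] = 0 ∧ ∀ u v : List (Fin h), u ≠ [] → v ≠ [] → S (cf h a) u v = 0) →
        (cf h b [] = 0 ∧ ∀ u v : List (Fin h), u ≠ [] → v ≠ [] → S (cf h b) u v = 0) →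
        ∀ u v : List (Fin h), u ≠ [] → v ≠ [] →
          S (cf h (a * b)) u v = cf h a u * cf h b v + cf h a v * cf h b u := by
      intro a b ha hb u v hu hv
      have hD : cf h (a * b) = D (cf h a) (cf h b) := by
        funext w
        rw [cf_mul]; rfl
      rw [hD, key u v (cf h a) (cf h b)]
      exact eval_double (cf h a) (cf h b) ha.1 hb.1 ha.2 hb.2 u v hu hv
    constructor
    · have : ⁅x, y⁆ = x * y - y * x := Ring.lie_def x y
      rw [this, cf_sub, hmul0 x y hx.1, hmul0 y x hy.1, sub_zero]
    · intro u v hu hv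
      have hlie : ⁅x, y⁆ = x * y - y * x := Ring.lie_def x y
      have : (cf h ⁅x, y⁆) = fun w => cf h (x * y) w - cf h (y * x) w := by
        funext w
        rw [hlie, cf_sub]
      rw [this, S_sub, hmulS x y hx hy u v hu hv, hmulS y x hy hx u v hu hv]
      ring

/-- The coefficient of a product of generators. -/
lemma cf_word (w' w : List (Fin h)) :
    cf h ((w'.map (FreeAlgebra.ι ℂ)).prod) w = if w = w' then 1 else 0 := by
  classical
  have hE : ∀ w' : List (Fin h),
      EFA h ((w'.map (FreeAlgebra.ι ℂ)).prod)
        = MonoidAlgebra.single (FreeMonoid.ofList w') 1 := by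
    intro w'
    induction w' with
    | nil =>
        simp only [List.map_nil, List.prod_nil, map_one]
        rw [MonoidAlgebra.one_def]
        rfl
    | cons b t ih =>
        simp only [List.map_cons, List.prod_cons, map_mul, ih]
        have hb : EFA h (FreeAlgebra.ι ℂ b) = MonoidAlgebra.single (FreeMonoid.of b) 1 := by
          simp [EFA, FreeAlgebra.equivMonoidAlgebraFreeMonoid]
        rw [hb, MonoidAlgebra.single_mul_single, one_mul]
        rfl
  rw [cf, hE, MonoidAlgebra.single_apply]
  by_cases hw : w = w'
  · subst hw
    simp
  · rw [if_neg hw, if_neg]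
    intro hx
    apply hw
    have := congrArg FreeMonoid.toList hx
    simpa [eq_comm] using this

/-- The coefficients of the homogeneous component recover `c` on words of the right length. -/
lemma cf_component (c : List (Fin h) → ℂ) (n : ℕ) (w : List (Fin h)) (hw : w.length = n) :
    cf h (∑ v : Fin n → Fin h,
        c (List.ofFn v) • ((List.ofFn v).map (FreeAlgebra.ι ℂ)).prod) w = c w := by
  classical
  subst hw
  rw [cf, map_sum]
  have hsum : (∑ v : Fin w.length → Fin h,
        EFA h (c (List.ofFn v) • ((List.ofFn v).map (FreeAlgebra.ι ℂ)).prod)).coeff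
          (FreeMonoid.ofList w)
      = ∑ v : Fin w.length → Fin h,
          (EFA h (c (List.ofFn v) • ((List.ofFn v).map (FreeAlgebra.ι ℂ)).prod)).coeff
            (FreeMonoid.ofList w) := by
    rw [MonoidAlgebra.coeff_sum, Finsupp.finset_sum_apply]
  rw [hsum]
  have hterm : ∀ v : Fin w.length → Fin h,
      (EFA h (c (List.ofFn v) • ((List.ofFn v).map (FreeAlgebra.ι ℂ)).prod)).coeff
          (FreeMonoid.ofList w)
        = if w = List.ofFn v then c (List.ofFn v) else 0 := by
    intro v
    have h0 : (EFA h (c (List.ofFn v) • ((List.ofFn v).map (FreeAlgebra.ι ℂ)).prod)).coeff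
          (FreeMonoid.ofList w)
        = cf h (c (List.ofFn v) • ((List.ofFn v).map (FreeAlgebra.ι ℂ)).prod) w := rfl
    rw [h0, cf_smul, cf_word]
    by_cases hwv : w = List.ofFn v
    · rw [if_pos hwv, if_pos hwv, mul_one]
    · rw [if_neg hwv, if_neg hwv, mul_zero]
  rw [Finset.sum_congr rfl fun v _ => hterm v]
  rw [Finset.sum_eq_single w.get]
  · simp [List.ofFn_get]
  · intro v _ hv
    have : w ≠ List.ofFn v := by
      intro hwv
      apply hv
      apply List.ofFn_injective
      rw [← hwv, List.ofFn_get]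
    simp [this]
  · intro habs
    exact absurd (Finset.mem_univ _) habs

end Coeffs

/-- Ree's theorem (forward direction): if the coefficient series `c` defines an element
`x = ∑_w c_w w` of the completed free Lie algebra on `b_1, …, b_h` — i.e. each homogeneous
component `∑_{|w|=n} c_w w` is a Lie element of the free associative algebra — then the
coefficients vanish on all shuffles of nonempty words, and `c_∅ = 0`. -/
theorem stmt_7 (h : ℕ) (c : List (Fin h) → ℂ)
    (hLie : ∀ n : ℕ,
        (∑ v : Fin n → Fin h,
            c (List.ofFn v) • ((List.ofFn v).map (FreeAlgebra.ι ℂ)).prod)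
          ∈ LieSubalgebra.lieSpan ℂ (FreeAlgebra ℂ (Fin h)) (Set.range (FreeAlgebra.ι ℂ))) :
    (∀ w1 w2 : List (Fin h), w1 ≠ [] → w2 ≠ [] → ((shuffles w1 w2).map c).sum = 0) ∧
    c [] = 0 := by
  constructor
  · intro w1 w2 hw1 hw2
    set n := w1.length + w2.length with hn
    set xn := ∑ v : Fin n → Fin h,
        c (List.ofFn v) • ((List.ofFn v).map (FreeAlgebra.ι ℂ)).prod with hxn
    have hmc : (shuffles w1 w2).map c = (shuffles w1 w2).map (cf h xn) := by
      apply Multiset.map_congr rfl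
      intro w hw
      rw [cf_component h c n w (ReeAux.length_mem_shuffles w1 w2 w hw)]
    rw [hmc]
    exact (lie_vanish h xn (hLie n)).2 w1 w2 hw1 hw2
  · have h0 := (lie_vanish h _ (hLie 0)).1
    rw [cf_component h c 0 [] rfl] at h0
    exact h0
end

section
/- Let g be the free Lie algebra over ℂ on 2h generators a^1,…,a^h, b_1,…,b_h, bigraded by the a-degree and the b-degree. Suppose c^1,…,c^h ∈ g are each homogeneous of a-degree 1 (each Lie monomial appearing contains exactly one letter from {a^1,…,a^h}), and suppose ∑_{J=1}^h [b_J, c^J] = 0 in g. Then c^J = 0 for all J = 1,…,h. -/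
open FreeAlgebra

attribute [local instance 100] LieRing.ofAssociativeRing

section aux

variable {h : ℕ}

abbrev σh (h : ℕ) := Fin h ⊕ Fin h

noncomputable abbrev eqv (h : ℕ) : FreeAlgebra ℂ (σh h) ≃ₐ[ℂ] MonoidAlgebra ℂ (FreeMonoid (σh h)) :=
  FreeAlgebra.equivMonoidAlgebraFreeMonoid

lemma eqv_ι (x : σh h) : eqv h (ι ℂ x) = MonoidAlgebra.single (FreeMonoid.of x) 1 := by
  simp [eqv, FreeAlgebra.equivMonoidAlgebraFreeMonoid, MonoidAlgebra.of_apply]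

lemma eqv_prod (w : List (σh h)) :
    eqv h ((w.map (ι ℂ)).prod) = MonoidAlgebra.single (FreeMonoid.ofList w) 1 := by
  induction w with
  | nil => simp [MonoidAlgebra.one_def, FreeMonoid.ofList_nil]
  | cons x xs ih =>
    rw [List.map_cons, List.prod_cons, map_mul, eqv_ι, ih,
      MonoidAlgebra.single_mul_single, one_mul, FreeMonoid.ofList_cons]

end aux

/-- In the free Lie algebra on generators `a^1,…,a^h, b_1,…,b_h` (realized as the Lie
subalgebra of the free associative algebra on `Fin h ⊕ Fin h` generated by the
generators, with `a`'s the left and `b`'s the right summands), if `c^1,…,c^h` are Lie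
elements homogeneous of `a`-degree 1 (they lie in the span of the words containing
exactly one `a`-letter) and `∑_J [b_J, c^J] = 0`, then `c^J = 0` for all `J`. -/
theorem stmt_14 (h : ℕ) (c : Fin h → FreeAlgebra ℂ (Fin h ⊕ Fin h))
    (hLie : ∀ J, c J ∈ LieSubalgebra.lieSpan ℂ (FreeAlgebra ℂ (Fin h ⊕ Fin h))
        (Set.range (ι ℂ)))
    (hdeg : ∀ J, c J ∈ Submodule.span ℂ
        {x : FreeAlgebra ℂ (Fin h ⊕ Fin h) |
          ∃ w : List (Fin h ⊕ Fin h), w.countP (fun i => i.isLeft) = 1 ∧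
            x = (w.map (ι ℂ)).prod})
    (hsum : ∑ J, ⁅ι ℂ (Sum.inr J : Fin h ⊕ Fin h), c J⁆ = 0) :
    ∀ J, c J = 0 := by
  classical
  set e := eqv h with he
  set f : Fin h → MonoidAlgebra ℂ (FreeMonoid (σh h)) := fun K => e (c K) with hf
  set B : Fin h → MonoidAlgebra ℂ (FreeMonoid (σh h)) :=
    fun K => MonoidAlgebra.single (FreeMonoid.of (Sum.inr K : σh h)) 1 with hB
  -- the coefficient-wise equation
  have key : ∀ W : FreeMonoid (σh h),
      ∑ K, (B K * f K).coeff W = ∑ K, (f K * B K).coeff W := by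
    intro W
    have h1 : ∑ K, (B K * f K - f K * B K) = 0 := by
      have := congrArg e hsum
      rw [map_sum, map_zero] at this
      rw [← this]
      refine Finset.sum_congr rfl fun K _ => ?_
      rw [Ring.lie_def, map_sub, map_mul, map_mul, eqv_ι]
    rw [Finset.sum_sub_distrib, sub_eq_zero] at h1
    have h2 : (∑ K, (B K * f K) : MonoidAlgebra ℂ (FreeMonoid (σh h))).coeff W
        = (∑ K, (f K * B K) : MonoidAlgebra ℂ (FreeMonoid (σh h))).coeff W := by rw [h1]
    rw [MonoidAlgebra.coeff_sum, MonoidAlgebra.coeff_sum, Finsupp.finset_sum_apply,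
      Finsupp.finset_sum_apply] at h2
    exact h2
  -- left coefficient computation
  have hL : ∀ (K : Fin h) (w : List (σh h)),
      ∑ K', (B K' * f K').coeff (FreeMonoid.ofList (Sum.inr K :: w)) = (f K).coeff (FreeMonoid.ofList w) := by
    intro K w
    rw [Finset.sum_eq_single K]
    · rw [hB]
      rw [MonoidAlgebra.coeff_single_mul_eq_mul_coeff (x := f K) (m := FreeMonoid.of (Sum.inr K : σh h))
        (m₂ := FreeMonoid.ofList w), one_mul]
      intro a _
      constructor
      · intro hh
        have h5 : (Sum.inr K : σh h) :: FreeMonoid.toList a = Sum.inr K :: w := hh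
        have h6 : FreeMonoid.toList a = w := by simpa using h5
        exact congrArg FreeMonoid.ofList h6
      · rintro rfl; rfl
    · intro K' _ hK'
      rw [hB]
      apply MonoidAlgebra.single_mul_apply_of_not_exists_mul
      rintro ⟨d, hd⟩
      have h5 : Sum.inr K :: w = (Sum.inr K' : σh h) :: FreeMonoid.toList d := hd
      simp only [List.cons.injEq, Sum.inr.injEq] at h5
      exact hK' h5.1.symm
    · intro hK; exact absurd (Finset.mem_univ K) hK
  -- right coefficient computations
  have hR0 : ∀ (w : List (σh h)) (m : Fin h),
      ∑ K', (f K' * B K').coeff (FreeMonoid.ofList (w ++ [Sum.inl m])) = 0 := by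
    intro w m
    refine Finset.sum_eq_zero fun K' _ => ?_
    rw [hB]
    apply MonoidAlgebra.mul_single_apply_of_not_exists_mul
    rintro ⟨d, hd⟩
    have h5 : w ++ [Sum.inl m] = FreeMonoid.toList d ++ [(Sum.inr K' : σh h)] := hd
    have h6 := congrArg List.getLast? h5
    simp only [List.getLast?_concat] at h6
    simp at h6
  have hR1 : ∀ (w : List (σh h)) (K₀ : Fin h),
      ∑ K', (f K' * B K').coeff (FreeMonoid.ofList (w ++ [Sum.inr K₀])) = (f K₀).coeff (FreeMonoid.ofList w) := by
    intro w K₀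
    rw [Finset.sum_eq_single K₀]
    · rw [hB]
      rw [MonoidAlgebra.coeff_mul_single_eq_coeff_mul (x := f K₀) (m := FreeMonoid.of (Sum.inr K₀ : σh h))
        (m₂ := FreeMonoid.ofList w), mul_one]
      intro a _
      constructor
      · intro hh
        have h5 : FreeMonoid.toList a ++ [(Sum.inr K₀ : σh h)] = w ++ [Sum.inr K₀] := hh
        have h6 : FreeMonoid.toList a = w := by
          have := congrArg List.dropLast h5
          simpa using this
        exact congrArg FreeMonoid.ofList h6
      · rintro rfl; rfl
    · intro K' _ hK'
      rw [hB]
      apply MonoidAlgebra.mul_single_apply_of_not_exists_mul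
      rintro ⟨d, hd⟩
      have h3 : w ++ [Sum.inr K₀] = FreeMonoid.toList d ++ [(Sum.inr K' : σh h)] := hd
      have h6 := congrArg List.getLast? h3
      simp only [List.getLast?_concat, Option.some.injEq, Sum.inr.injEq] at h6
      exact hK' h6.symm
    · intro hK; exact absurd (Finset.mem_univ K₀) hK
  -- words ending in a left letter have zero coefficient
  have endl : ∀ (K : Fin h) (w : List (σh h)) (m : Fin h),
      (f K).coeff (FreeMonoid.ofList (w ++ [Sum.inl m])) = 0 := by
    intro K w m
    have := key (FreeMonoid.ofList ((Sum.inr K :: w) ++ [Sum.inl m]))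
    rw [hR0] at this
    rw [show ((Sum.inr K : σh h) :: w) ++ [Sum.inl m] = Sum.inr K :: (w ++ [Sum.inl m]) by simp]
      at this
    rw [hL] at this
    exact this
  -- main induction
  have main : ∀ (v u : List (σh h)) (K m : Fin h),
      (f K).coeff (FreeMonoid.ofList (u ++ Sum.inl m :: v)) = 0 := by
    intro v
    induction v using List.reverseRecOn with
    | nil =>
      intro u K m
      exact endl K u m
    | append_singleton v' s ih =>
      intro u K m
      match s with
      | Sum.inl m' =>
        have : u ++ Sum.inl m :: (v' ++ [Sum.inl m']) = (u ++ Sum.inl m :: v') ++ [Sum.inl m'] := by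
          simp
        rw [this]
        exact endl K _ m'
      | Sum.inr K₀ =>
        have := key (FreeMonoid.ofList ((Sum.inr K :: (u ++ Sum.inl m :: v')) ++ [Sum.inr K₀]))
        rw [hR1] at this
        rw [show ((Sum.inr K : σh h) :: (u ++ Sum.inl m :: v')) ++ [Sum.inr K₀]
            = Sum.inr K :: (u ++ Sum.inl m :: (v' ++ [Sum.inr K₀])) by simp] at this
        rw [hL] at this
        rw [this]
        exact ih (Sum.inr K :: u) K₀ m
  -- support condition from hdeg
  intro J
  have hsupp : ∀ w ∈ (f J).coeff.support, (FreeMonoid.toList w).countP (fun i => i.isLeft) = 1 := by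
    have h1 : f J ∈ Submodule.span ℂ
        {x : MonoidAlgebra ℂ (FreeMonoid (σh h)) |
          ∃ w : List (σh h), w.countP (fun i => i.isLeft) = 1 ∧
            x = MonoidAlgebra.single (FreeMonoid.ofList w) 1} := by
      have h2 := hdeg J
      have h3 := Submodule.apply_mem_span_image_of_mem_span (e.toLinearMap) h2
      refine Submodule.span_mono ?_ h3
      rintro x ⟨y, ⟨w, hw, rfl⟩, rfl⟩
      exact ⟨w, hw, eqv_prod w⟩
    have h4 : Submodule.span ℂ
        {x : MonoidAlgebra ℂ (FreeMonoid (σh h)) |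
          ∃ w : List (σh h), w.countP (fun i => i.isLeft) = 1 ∧
            x = MonoidAlgebra.single (FreeMonoid.ofList w) 1} ≤
        MonoidAlgebra.supported ℂ ℂ {w : FreeMonoid (σh h) |
          (FreeMonoid.toList w).countP (fun i => i.isLeft) = 1} := by
      rw [Submodule.span_le]
      rintro x ⟨w, hw, rfl⟩
      rw [SetLike.mem_coe, MonoidAlgebra.mem_supported]
      intro y hy
      rw [Finset.mem_coe] at hy
      have h5 := Finsupp.support_single_subset hy
      rw [Finset.mem_singleton] at h5
      subst h5
      exact hw
    intro w hw
    exact h4 h1 hw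
  have hfJ : f J = 0 := by
    ext w
    by_contra hne
    have hw : w ∈ (f J).coeff.support := Finsupp.mem_support_iff.mpr hne
    have hc := hsupp w hw
    have hpos : 0 < List.countP (fun i => Sum.isLeft i) (FreeMonoid.toList w) :=
      lt_of_lt_of_le zero_lt_one hc.ge
    obtain ⟨x, hx, hxl⟩ := List.countP_pos_iff.mp hpos
    obtain ⟨m, rfl⟩ := Sum.isLeft_iff.mp hxl
    obtain ⟨u, v, huv⟩ := List.append_of_mem hx
    have : w = FreeMonoid.ofList (u ++ Sum.inl m :: v) := congrArg FreeMonoid.ofList huv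
    rw [this] at hne
    exact hne (main v u J m)
  have h0 : e (c J) = e 0 := by rw [map_zero]; exact hfJ
  exact e.injective h0
end
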